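/- Diamagnetic inequality: let ψ : ℝⁿ → ℂ be differentiable at x with ψ(x) ≠ 0, let A(x) : ℝⁿ → ℝ be a continuous linear functional, and let N be any norm on the space of continuous real-linear functionals ℝⁿ → ℝ. Write Re(D_Aψ)(x) and Im(D_Aψ)(x) for the real covectors v ↦ Re((D_Aψ)(x)(v)) and v ↦ Im((D_Aψ)(x)(v)). Then N(d|ψ|(x)) ≤ sqrt( N(Re(D_Aψ)(x))² + N(Im(D_Aψ)(x))² ). -/

import Mathlib

set_option maxHeartbeats 1000000


/-- Diamagnetic inequality: if `ψ` is differentiable at `x` with `ψ(x) ≠ 0`,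
`A(x)` is a real covector at `x`, and `N` is any norm on the space of real covectors
on `ℝⁿ`, then for the derivative `d` of `y ↦ |ψ(y)|` at `x`,
`N(d|ψ|(x)) ≤ sqrt(N(Re(D_Aψ)(x))² + N(Im(D_Aψ)(x))²)`, where
`(D_Aψ)(x) = Dψ(x) − i A(x) ψ(x)`. -/
theorem diamagnetic_inequality (n : ℕ)
    (ψ : EuclideanSpace ℝ (Fin n) → ℂ) (x : EuclideanSpace ℝ (Fin n))
    (hψ : DifferentiableAt ℝ ψ x) (hne : ψ x ≠ 0)
    (A : EuclideanSpace ℝ (Fin n) →L[ℝ] ℝ)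
    (N : (EuclideanSpace ℝ (Fin n) →L[ℝ] ℝ) → ℝ)
    (hN_add : ∀ f g : EuclideanSpace ℝ (Fin n) →L[ℝ] ℝ, N (f + g) ≤ N f + N g)
    (hN_smul : ∀ (c : ℝ) (f : EuclideanSpace ℝ (Fin n) →L[ℝ] ℝ), N (c • f) = |c| * N f)
    (hN_def : ∀ f : EuclideanSpace ℝ (Fin n) →L[ℝ] ℝ, N f = 0 ↔ f = 0)
    (d : EuclideanSpace ℝ (Fin n) →L[ℝ] ℝ)
    (hd : HasFDerivAt (fun y => ‖ψ y‖) d x) :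
    N d ≤ Real.sqrt
      (N (Complex.reCLM.comp (fderiv ℝ ψ x - A.smulRight (Complex.I * ψ x))) ^ 2 +
       N (Complex.imCLM.comp (fderiv ℝ ψ x - A.smulRight (Complex.I * ψ x))) ^ 2) := by
  set F := fderiv ℝ ψ x with hF
  have hFd : HasFDerivAt ψ F x := hψ.hasFDerivAt
  set r := ‖ψ x‖ with hrdef
  have hrpos : 0 < r := norm_pos_iff.mpr hne
  set a := (ψ x).re / r with ha
  set b := (ψ x).im / r with hb
  have hab : a ^ 2 + b ^ 2 = 1 := by
    have : (ψ x).re ^ 2 + (ψ x).im ^ 2 = r ^ 2 := by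
      rw [hrdef, Complex.sq_norm, Complex.normSq_apply]; ring
    rw [ha, hb, div_pow, div_pow, ← add_div, this, div_self (by positivity)]
  set RF := Complex.reCLM.comp F with hRF
  set IF := Complex.imCLM.comp F with hIF
  have hre : HasFDerivAt (fun y => (ψ y).re) RF x := (Complex.reCLM.hasFDerivAt).comp x hFd
  have him : HasFDerivAt (fun y => (ψ y).im) IF x := (Complex.imCLM.hasFDerivAt).comp x hFd
  have hns : HasFDerivAt (fun y => (ψ y).re * (ψ y).re + (ψ y).im * (ψ y).im)
      (((ψ x).re • RF + (ψ x).re • RF) + ((ψ x).im • IF + (ψ x).im • IF)) x :=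
    (hre.mul hre).add (him.mul him)
  have hu : (ψ x).re * (ψ x).re + (ψ x).im * (ψ x).im ≠ 0 := by
    rw [← Complex.normSq_apply]
    simpa using hne
  have hsq := (Real.hasDerivAt_sqrt hu).comp_hasFDerivAt x hns
  have habs : (fun y => ‖ψ y‖) =
      (fun y => Real.sqrt ((ψ y).re * (ψ y).re + (ψ y).im * (ψ y).im)) := by
    funext y
    rw [Complex.norm_def, Complex.normSq_apply]
  rw [habs] at hd
  have hdeq : d = (1 / (2 * Real.sqrt ((ψ x).re * (ψ x).re + (ψ x).im * (ψ x).im))) •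
      (((ψ x).re • RF + (ψ x).re • RF) + ((ψ x).im • IF + (ψ x).im • IF)) :=
    hd.unique hsq
  have hsr : Real.sqrt ((ψ x).re * (ψ x).re + (ψ x).im * (ψ x).im) = r := by
    rw [hrdef, Complex.norm_def, Complex.normSq_apply]
  have hdeq2 : d = a • RF + b • IF := by
    rw [hdeq, hsr]
    ext v
    simp [ha, hb, ContinuousLinearMap.smul_apply]
    field_simp
    ring
  set RG := Complex.reCLM.comp (F - A.smulRight (Complex.I * ψ x)) with hRG
  set IG := Complex.imCLM.comp (F - A.smulRight (Complex.I * ψ x)) with hIG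
  have hcomb : d = a • RG + b • IG := by
    rw [hdeq2]
    ext v
    simp [hRG, hIG, hRF, hIF, ha, hb, ContinuousLinearMap.smul_apply,
      ContinuousLinearMap.smulRight_apply, Complex.smul_re, Complex.smul_im,
      Complex.mul_re, Complex.mul_im]
    field_simp
    ring
  -- nonnegativity of N
  have hN0 : N 0 = 0 := by
    have := hN_smul 0 0
    simpa using this
  have hNneg : ∀ f, 0 ≤ N f := by
    intro f
    have h1 : N (f + (-1 : ℝ) • f) ≤ N f + N ((-1 : ℝ) • f) := hN_add _ _
    have h2 : N ((-1 : ℝ) • f) = N f := by rw [hN_smul]; simp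
    have h3 : f + (-1 : ℝ) • f = 0 := by ext v; simp
    rw [h3, hN0, h2] at h1
    linarith
  set X := N RG
  set Y := N IG
  have hX : 0 ≤ X := hNneg _
  have hY : 0 ≤ Y := hNneg _
  have hNd : N d ≤ |a| * X + |b| * Y := by
    rw [hcomb]
    calc N (a • RG + b • IG) ≤ N (a • RG) + N (b • IG) := hN_add _ _
    _ = |a| * X + |b| * Y := by rw [hN_smul, hN_smul]
  have hCS : (|a| * X + |b| * Y) ^ 2 ≤ X ^ 2 + Y ^ 2 := by
    nlinarith [sq_nonneg (|a| * Y - |b| * X), sq_abs a, sq_abs b, abs_nonneg a, abs_nonneg b]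
  have : N d ^ 2 ≤ X ^ 2 + Y ^ 2 := by
    have h1 : N d ^ 2 ≤ (|a| * X + |b| * Y) ^ 2 := by
      apply pow_le_pow_left₀ (hNneg d) hNd 2
    linarith
  exact (Real.le_sqrt (hNneg d) (by positivity)).mpr this
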